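/- Let k be a field, let F be the free commutative monoid on generators f_1, …, f_r (so F ≅ ℕ^r), and let P ⊆ F be a submonoid. Let ψ_1, ψ_2: F → k[[t]] be homomorphisms of monoids into the multiplicative monoid of the formal power series ring k[[t]] such that (a) ψ_1(p) = ψ_2(p) for all p ∈ P, and (b) for every f ∈ F, the power series ψ_1(f) and ψ_2(f) are nonzero and have equal t-adic order. Then there exists a unique monoid homomorphism g: F → k[[t]]ˣ into the group of units of k[[t]] such that g(f)·ψ_1(f) = ψ_2(f) for all f ∈ F, and this g satisfies g(p) = 1 for all p ∈ P. -/

import Mathlib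

open PowerSeries

/-- If two nonzero power series over a field have equal order, some unit
carries one to the other. -/
lemma exists_unit_mul_eq {k : Type*} [Field k] (a b : PowerSeries k)
    (ha : a ≠ 0) (hb : b ≠ 0) (hord : a.order = b.order) :
    ∃ u : (PowerSeries k)ˣ, (u : PowerSeries k) * a = b := by
  set u := Unit_of_divided_by_X_pow_order a with hu
  set v := Unit_of_divided_by_X_pow_order b with hv
  refine ⟨v * u⁻¹, ?_⟩
  have hn : a.order.lift (order_finite_iff_ne_zero.mpr ha)
      = b.order.lift (order_finite_iff_ne_zero.mpr hb) := by
    simp [hord]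
  set n := b.order.lift (order_finite_iff_ne_zero.mpr hb) with hndef
  have ha' : a = X ^ n * (u : PowerSeries k) := by
    rw [hu, Unit_of_divided_by_X_pow_order_nonzero ha, ← hn]
    rw [ENat.lift_eq_toNat_of_lt_top]
    exact X_pow_order_mul_divXPowOrder.symm
  have hb' : b = X ^ n * (v : PowerSeries k) := by
    rw [hv, Unit_of_divided_by_X_pow_order_nonzero hb]
    rw [hndef, ENat.lift_eq_toNat_of_lt_top]
    exact X_pow_order_mul_divXPowOrder.symm
  push_cast
  rw [ha', hb']
  rw [show ((v : PowerSeries k) * ((u⁻¹ : (PowerSeries k)ˣ) : PowerSeries k))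
        * (X ^ n * (u : PowerSeries k))
      = X ^ n * (v : PowerSeries k)
        * (((u⁻¹ : (PowerSeries k)ˣ) : PowerSeries k) * (u : PowerSeries k)) by ring,
    ← Units.val_mul, inv_mul_cancel, Units.val_one, mul_one]

theorem stmt12 (k : Type*) [Field k] (r : ℕ)
    (P : AddSubmonoid (Fin r → ℕ))
    (ψ₁ ψ₂ : (Fin r → ℕ) → PowerSeries k)
    (hψ₁0 : ψ₁ 0 = 1) (hψ₁add : ∀ a b, ψ₁ (a + b) = ψ₁ a * ψ₁ b)
    (hψ₂0 : ψ₂ 0 = 1) (hψ₂add : ∀ a b, ψ₂ (a + b) = ψ₂ a * ψ₂ b)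
    (hagree : ∀ p ∈ P, ψ₁ p = ψ₂ p)
    (hne : ∀ f, ψ₁ f ≠ 0 ∧ ψ₂ f ≠ 0)
    (horder : ∀ f, (ψ₁ f).order = (ψ₂ f).order) :
    (∃! g : (Fin r → ℕ) → (PowerSeries k)ˣ,
      (g 0 = 1 ∧ ∀ a b, g (a + b) = g a * g b) ∧
      ∀ f, (g f : PowerSeries k) * ψ₁ f = ψ₂ f) ∧
    (∀ g : (Fin r → ℕ) → (PowerSeries k)ˣ,
      ((g 0 = 1 ∧ ∀ a b, g (a + b) = g a * g b) ∧
        ∀ f, (g f : PowerSeries k) * ψ₁ f = ψ₂ f) →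
      ∀ p ∈ P, g p = 1) := by
  -- pointwise uniqueness via cancellation
  have cancel : ∀ (f : Fin r → ℕ) (u v : (PowerSeries k)ˣ),
      (u : PowerSeries k) * ψ₁ f = (v : PowerSeries k) * ψ₁ f → u = v := by
    intro f u v h
    exact Units.ext (mul_right_cancel₀ (hne f).1 h)
  choose g hg using fun f => exists_unit_mul_eq (ψ₁ f) (ψ₂ f) (hne f).1 (hne f).2 (horder f)
  have hg0 : g 0 = 1 := by
    apply cancel 0
    rw [hg 0, hψ₁0, hψ₂0, Units.val_one, one_mul]
  have hgadd : ∀ a b, g (a + b) = g a * g b := by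
    intro a b
    apply cancel (a + b)
    rw [hg (a + b), hψ₁add, hψ₂add, Units.val_mul]
    rw [show ((g a : PowerSeries k) * (g b : PowerSeries k)) * (ψ₁ a * ψ₁ b)
        = ((g a : PowerSeries k) * ψ₁ a) * ((g b : PowerSeries k) * ψ₁ b) by ring,
      hg a, hg b]
  constructor
  · refine ⟨g, ⟨⟨hg0, hgadd⟩, hg⟩, ?_⟩
    intro g' ⟨_, hg'⟩
    funext f
    exact cancel f (g' f) (g f) (by rw [hg' f, hg f])
  · intro g' ⟨_, hg'⟩ p hp
    apply cancel p
    rw [hg' p, ← hagree p hp, Units.val_one, one_mul]
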